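/- Let A be an integral NDA, and let ρ¹ = ρ¹₀,…,ρ¹_{n+1} and ρ² = ρ²₀,…,ρ²_{n+1} be two runs of A of length n+1 such that Γ(ρ¹₀,…,ρ¹ₙ) − Γ(ρ²₀,…,ρ²ₙ) > M. Then Γ(ρ¹₀,…,ρ¹_{n+1}) − Γ(ρ²₀,…,ρ²_{n+1}) > Γ(ρ¹₀,…,ρ¹ₙ) − Γ(ρ²₀,…,ρ²ₙ). -/

import Mathlib

/-- A nondeterministic integral discounted-sum automaton (NDA) over alphabet `σ`
with state type `Q`. -/
structure NDA (σ : Type) (Q : Type) where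
  init : Set Q
  acc : Set Q
  delta : Set (Q × σ × Q)
  val : Q × σ × Q → ℕ
  fval : Q → ℕ
  lam : ℕ
  one_lt_lam : 1 < lam

namespace NDA

variable {σ Q : Type}

/-- The adjacency (transition) condition for a sequence of states along the word `w`. -/
def Steps (A : NDA σ Q) (w : List σ) (ρ : ℕ → Q) : Prop :=
  ∀ i : Fin w.length, (ρ (i : ℕ), w.get i, ρ ((i : ℕ) + 1)) ∈ A.delta

/-- A run of `A` on `w`: starts in an initial state and follows transitions. -/
def IsRun (A : NDA σ Q) (w : List σ) (ρ : ℕ → Q) : Prop :=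
  ρ 0 ∈ A.init ∧ A.Steps w ρ

/-- A run of `A` on `w` starting in the state `q`. -/
def IsRunFrom (A : NDA σ Q) (q : Q) (w : List σ) (ρ : ℕ → Q) : Prop :=
  ρ 0 = q ∧ A.Steps w ρ

/-- The discounted weight of the sequence of states `ρ` along the word `w`. -/
def runVal (A : NDA σ Q) (w : List σ) (ρ : ℕ → Q) : ℚ :=
  ∑ i : Fin w.length,
    ((A.lam : ℚ)⁻¹) ^ (i : ℕ) * (A.val (ρ (i : ℕ), w.get i, ρ ((i : ℕ) + 1)) : ℚ)

/-- `A_[P→P'](w)`: minimal weight of a run on `w` from `P` to `P'` (`⊤` if none). -/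
noncomputable def minVal (A : NDA σ Q) (P P' : Set Q) (w : List σ) : EReal :=
  sInf {x : EReal | ∃ ρ : ℕ → Q, ρ 0 ∈ P ∧ A.Steps w ρ ∧ ρ w.length ∈ P' ∧
    x = ((A.runVal w ρ : ℝ) : EReal)}

/-- `A_[P→_f P'](w)`: minimal weight including the final weight of an accepting
run on `w` from `P` ending in `P' ∩ α` (`⊤` if none). -/
noncomputable def minValF (A : NDA σ Q) (P P' : Set Q) (w : List σ) : EReal :=
  sInf {x : EReal | ∃ ρ : ℕ → Q, ρ 0 ∈ P ∧ A.Steps w ρ ∧ ρ w.length ∈ P' ∩ A.acc ∧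
    x = (((A.runVal w ρ + ((A.lam : ℚ)⁻¹) ^ w.length * (A.fval (ρ w.length) : ℚ) : ℚ) : ℝ) : EReal)}

/-- `A*(w)`: the value of the word `w`. -/
noncomputable def starVal (A : NDA σ Q) (w : List σ) : EReal :=
  A.minValF A.init Set.univ w

/-- `(w, qu, ql)` is a recoverable gap with respect to `z`. -/
def RecGap (A : NDA σ Q) (w z : List σ) (qu ql : Q) : Prop :=
  A.minVal A.init {ql} w ≤ A.minVal A.init {qu} w ∧
  A.minVal A.init {qu} w +
      ((((A.lam : ℝ)⁻¹) ^ w.length : ℝ) : EReal) * A.minValF {qu} Set.univ z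
    = A.starVal (w ++ z) ∧
  A.starVal (w ++ z) < ⊤

/-- `gap_{qu,ql}(w) = λ^{|w|}·(A_[Q₀→qu](w) − A_[Q₀→ql](w))`: the size of a gap. -/
noncomputable def gapSize (A : NDA σ Q) (w : List σ) (qu ql : Q) : EReal :=
  (((A.lam : ℝ) ^ w.length : ℝ) : EReal) *
    (A.minVal A.init {qu} w - A.minVal A.init {ql} w)

/-- The set of sizes of recoverable gaps of `A`. -/
def gapSizes (A : NDA σ Q) : Set EReal :=
  {g | ∃ w z qu ql, A.RecGap w z qu ql ∧ g = A.gapSize w qu ql}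

/-- `A` is deterministic (a DDA). -/
def Deterministic (A : NDA σ Q) : Prop :=
  (∃! q, q ∈ A.init) ∧ ∀ p s, {q | (p, s, q) ∈ A.delta}.Subsingleton

/-- `A` is determinizable: it has an equivalent DDA over the same alphabet with
the same discounting factor. -/
def Determinizable (A : NDA σ Q) : Prop :=
  ∃ (Q' : Type) (_ : Fintype Q') (D : NDA σ Q'),
    D.Deterministic ∧ D.lam = A.lam ∧ ∀ w : List σ, A.starVal w = D.starVal w

/-- `m_A`: the maximal transition weight or final weight of `A`. -/
noncomputable def mA (A : NDA σ Q) [Fintype σ] [Fintype Q] : ℕ :=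
  max ((Set.toFinite A.delta).toFinset.sup A.val)
      ((Set.toFinite A.acc).toFinset.sup A.fval)

/-- `M = 2·(λ/(λ−1))·m_A`. -/
noncomputable def M (A : NDA σ Q) [Fintype σ] [Fintype Q] : ℚ :=
  2 * ((A.lam : ℚ) / ((A.lam : ℚ) - 1)) * (A.mA : ℚ)

/-- `Γ` of the length-`i` prefix of a run on `w`: `λ^i` times its weight. -/
def gammaPfx (A : NDA σ Q) (w : List σ) (ρ : ℕ → Q) (i : ℕ) : ℚ :=
  (A.lam : ℚ) ^ i * A.runVal (w.take i) ρ

/-- `𝒩 = λ^{|Q|²·2^{|Q|²}}·((|Q|−2)·M) + M`. -/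
noncomputable def calN (A : NDA σ Q) [Fintype σ] [Fintype Q] : ℚ :=
  (A.lam : ℚ) ^ ((Fintype.card Q) ^ 2 * 2 ^ ((Fintype.card Q) ^ 2)) *
      (((Fintype.card Q : ℚ) - 2) * A.M) + A.M

/-- `C = (λ/(λ−1))·(𝒩·|Q| + 2·m_A)`. -/
noncomputable def calC (A : NDA σ Q) [Fintype σ] [Fintype Q] : ℚ :=
  ((A.lam : ℚ) / ((A.lam : ℚ) - 1)) * (A.calN * (Fintype.card Q : ℚ) + 2 * (A.mA : ℚ))

/-- `w` has the `n`-separation property with respect to `(U, L, qu, z)`. -/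
def SepPropWith (A : NDA σ Q) (n : ℚ) (w : List σ) (U L : Set Q) (qu : Q) (z : List σ) : Prop :=
  U ∪ L = Set.univ ∧ Disjoint U L ∧ U.Nonempty ∧ L.Nonempty ∧
  (∀ qu' ∈ U, ∀ ql ∈ L,
    (((A.lam : ℝ) ^ w.length : ℝ) : EReal) *
        (A.minVal A.init {qu'} w - A.minVal A.init {ql} w) > ((n : ℝ) : EReal)) ∧
  qu ∈ U ∧ ∀ ql ∈ L, A.RecGap w z qu ql

/-- `w` has the `n`-separation property. -/
def SepProp (A : NDA σ Q) (n : ℚ) (w : List σ) : Prop :=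
  ∃ U L qu z, A.SepPropWith n w U L qu z

end NDA


lemma runVal_take_eq {σ Q : Type} (A : NDA σ Q) (w : List σ) (ρ : ℕ → Q) (i : ℕ) :
    A.runVal (w.take i) ρ = ∑ j ∈ Finset.range (min i w.length),
      ((A.lam : ℚ)⁻¹) ^ j *
        (if h : j < w.length then (A.val (ρ j, w.get ⟨j, h⟩, ρ (j + 1)) : ℚ) else 0) := by
  rw [NDA.runVal]
  have hl : (w.take i).length = min i w.length := by simp
  rw [show (∑ j : Fin (w.take i).length, ((A.lam : ℚ)⁻¹) ^ (j : ℕ) *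
        (A.val (ρ (j : ℕ), (w.take i).get j, ρ ((j : ℕ) + 1)) : ℚ)) =
      (∑ j : Fin (w.take i).length, (fun k : ℕ => ((A.lam : ℚ)⁻¹) ^ k *
        (if h : k < w.length then (A.val (ρ k, w.get ⟨k, h⟩, ρ (k + 1)) : ℚ) else 0)) (j : ℕ))
      from Finset.sum_congr rfl (by
        intro j _
        have hj : (j : ℕ) < w.length := by
          have := j.2; simp only [List.length_take] at this; omega
        simp only [dif_pos hj]
        congr 2
        simp [List.get_eq_getElem, List.getElem_take])]
  rw [Fin.sum_univ_eq_sum_range (fun k : ℕ => ((A.lam : ℚ)⁻¹) ^ k *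
        (if h : k < w.length then (A.val (ρ k, w.get ⟨k, h⟩, ρ (k + 1)) : ℚ) else 0))
      ((w.take i).length), hl]

/-- If two runs of length `n+1` have a normalized gap larger than `M` after
`n` steps, then the gap strictly increases at step `n+1`. -/
theorem large_gap_has_to_increase {σ Q : Type} [Fintype σ] [Fintype Q]
    (A : NDA σ Q) (w : List σ) (n : ℕ) (hw : w.length = n + 1)
    (ρ1 ρ2 : ℕ → Q) (h1 : A.IsRun w ρ1) (h2 : A.IsRun w ρ2)
    (hgap : A.gammaPfx w ρ1 n - A.gammaPfx w ρ2 n > A.M) :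
    A.gammaPfx w ρ1 (n + 1) - A.gammaPfx w ρ2 (n + 1) >
      A.gammaPfx w ρ1 n - A.gammaPfx w ρ2 n := by
  have hn : n < w.length := by omega
  have hlam2 : (2 : ℚ) ≤ (A.lam : ℚ) := by exact_mod_cast A.one_lt_lam
  have hlam0 : (A.lam : ℚ) ≠ 0 := by positivity
  -- step formula
  set L : ℚ := (A.lam : ℚ) with hL
  have key : ∀ ρ : ℕ → Q, A.Steps w ρ →
      A.gammaPfx w ρ (n + 1) = L * A.gammaPfx w ρ n +
        L * (A.val (ρ n, w.get ⟨n, hn⟩, ρ (n + 1)) : ℚ) := by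
    intro ρ _
    unfold NDA.gammaPfx
    rw [runVal_take_eq, runVal_take_eq]
    have h1 : min (n + 1) w.length = n + 1 := by omega
    have h2 : min n w.length = n := by omega
    rw [h1, h2, Finset.sum_range_succ, dif_pos hn, mul_add]
    have hL0 : L ≠ 0 := hlam0
    field_simp
    have hp : (A.lam : ℚ) ^ n * (A.lam : ℚ)⁻¹ ^ n = 1 := by
      rw [← mul_pow, mul_inv_cancel₀ hlam0, one_pow]
    rw [hL]
    linear_combination ((A.lam : ℚ) * (A.val (ρ n, w.get ⟨n, hn⟩, ρ (n + 1)) : ℚ)) * hp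
  obtain ⟨-, hs1⟩ := h1
  obtain ⟨-, hs2⟩ := h2
  rw [key ρ1 hs1, key ρ2 hs2]
  -- bound v2 by mA
  have hmem : (ρ2 n, w.get ⟨n, hn⟩, ρ2 (n + 1)) ∈ A.delta := by
    have := hs2 ⟨n, hn⟩
    simpa using this
  have hv2 : (A.val (ρ2 n, w.get ⟨n, hn⟩, ρ2 (n + 1)) : ℚ) ≤ (A.mA : ℚ) := by
    have h1 : A.val (ρ2 n, w.get ⟨n, hn⟩, ρ2 (n + 1)) ≤ A.mA := by
      refine le_trans (Finset.le_sup ?_) (le_max_left _ _)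
      exact (Set.Finite.mem_toFinset _).mpr hmem
    exact_mod_cast h1
  have hv1 : (0 : ℚ) ≤ (A.val (ρ1 n, w.get ⟨n, hn⟩, ρ1 (n + 1)) : ℚ) := by positivity
  have hmA : (0 : ℚ) ≤ (A.mA : ℚ) := by positivity
  have hM : A.M = 2 * (L / (L - 1)) * (A.mA : ℚ) := rfl
  set D := A.gammaPfx w ρ1 n - A.gammaPfx w ρ2 n with hD
  have hL1 : (0 : ℚ) < L - 1 := by linarith
  have hgap' : (L - 1) * D > 2 * L * (A.mA : ℚ) := by
    have : A.M * (L - 1) = 2 * L * (A.mA : ℚ) := by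
      rw [hM]; field_simp
    nlinarith [hgap]
  nlinarith [hv2, hv1, hmA, hgap']
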